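/- Let n = d₁ + d₂ with d₁, d₂ ≥ 1, and let A, N₁, …, N_m ∈ ℂ^{n×n}, B ∈ ℂ^{n×m}, C ∈ ℂ^{l×n}. Suppose: (i) A is Hurwitz; (ii) the diagonal matrix Σ = diag(σ₁, …, σ_n) with all σ_i > 0 satisfies both generalized Lyapunov equations A Σ + Σ A* + Σ_{k=1}^m N_k Σ N_k* + B B* = 0 and A* Σ + Σ A + Σ_{k=1}^m N_k* Σ N_k + C* C = 0; (iii) the pair (A,B) is controllable and the pair (A,C) is observable; (iv) the sets {σ₁, …, σ_{d₁}} and {σ_{d₁+1}, …, σ_n} are disjoint. Write A in blocks A = [[A₁₁, A₁₂],[A₂₁, A₂₂]] with A₁₁ ∈ ℂ^{d₁×d₁} and A₂₂ ∈ ℂ^{d₂×d₂}. Then A₂₂ is invertible and every eigenvalue of the Schur complement A₁₁ − A₁₂ A₂₂⁻¹ A₂₁ has strictly negative real part. -/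

import Mathlib

open Matrix

open Complex

namespace BalancedSchur

lemma sum_mulVec' {ι μ' : Type*} [Fintype ι] [Fintype μ'] (f : μ' → Matrix ι ι ℂ) (v : ι → ℂ) :
    (∑ k, f k) *ᵥ v = ∑ k, f k *ᵥ v := by
  ext i
  simp only [mulVec, dotProduct, Matrix.sum_apply, Finset.sum_apply, Finset.sum_mul]
  rw [Finset.sum_comm]

lemma dotProduct_sum' {ι μ' : Type*} [Fintype ι] [Fintype μ'] (v : ι → ℂ) (w : μ' → ι → ℂ) :
    v ⬝ᵥ (∑ k, w k) = ∑ k, v ⬝ᵥ w k := by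
  simp only [dotProduct, Finset.sum_apply, Finset.mul_sum]
  rw [Finset.sum_comm]

lemma quad_MDMH {ι : Type*} [Fintype ι] [DecidableEq ι] (d : ι → ℝ) (M : Matrix ι ι ℂ) (v : ι → ℂ) :
    star v ⬝ᵥ ((M * diagonal (fun i => (d i : ℂ)) * Mᴴ) *ᵥ v)
      = ∑ j, ((d j * normSq ((Mᴴ *ᵥ v) j) : ℝ) : ℂ) := by
  rw [← Matrix.mulVec_mulVec, ← Matrix.mulVec_mulVec, Matrix.dotProduct_mulVec]
  have h1 : star v ᵥ* M = star (Mᴴ *ᵥ v) := by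
    rw [Matrix.star_mulVec, conjTranspose_conjTranspose]
  rw [h1]
  simp only [dotProduct, Matrix.mulVec_diagonal, Pi.star_apply, RCLike.star_def,
    Complex.ofReal_mul]
  apply Finset.sum_congr rfl; intro j _
  rw [Complex.normSq_eq_conj_mul_self]
  ring

lemma quad_MMH {ι κ : Type*} [Fintype ι] [Fintype κ] (M : Matrix ι κ ℂ) (v : ι → ℂ) :
    star v ⬝ᵥ ((M * Mᴴ) *ᵥ v) = ∑ j, ((normSq ((Mᴴ *ᵥ v) j) : ℝ) : ℂ) := by
  rw [← Matrix.mulVec_mulVec, Matrix.dotProduct_mulVec]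
  have h1 : star v ᵥ* M = star (Mᴴ *ᵥ v) := by
    rw [Matrix.star_mulVec, conjTranspose_conjTranspose]
  rw [h1]
  simp only [dotProduct, Pi.star_apply, RCLike.star_def]
  apply Finset.sum_congr rfl; intro j _
  rw [Complex.normSq_eq_conj_mul_self]

lemma key {ι κ μ' : Type*} [Fintype ι] [DecidableEq ι] [Fintype κ] [Fintype μ']
    (σ : ι → ℝ) (hσ : ∀ i, 0 < σ i)
    (A' : Matrix ι ι ℂ) (N' : μ' → Matrix ι ι ℂ) (B' : Matrix ι κ ℂ)
    (h : A' * diagonal (fun i => (σ i : ℂ)) + diagonal (fun i => (σ i : ℂ)) * A'ᴴ +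
        (∑ k, N' k * diagonal (fun i => (σ i : ℂ)) * (N' k)ᴴ) + B' * B'ᴴ = 0)
    (v : ι → ℂ)
    (hre : 0 ≤ (star v ⬝ᵥ ((A' * diagonal (fun i => (σ i : ℂ)) +
        diagonal (fun i => (σ i : ℂ)) * A'ᴴ) *ᵥ v)).re) :
    (star v ⬝ᵥ ((A' * diagonal (fun i => (σ i : ℂ)) +
        diagonal (fun i => (σ i : ℂ)) * A'ᴴ) *ᵥ v)).re = 0 ∧
    A' *ᵥ (diagonal (fun i => (σ i : ℂ)) *ᵥ v)
      = -(diagonal (fun i => (σ i : ℂ)) *ᵥ (A'ᴴ *ᵥ v)) := by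
  set D : Matrix ι ι ℂ := diagonal (fun i => (σ i : ℂ)) with hD
  set t : ℂ := star v ⬝ᵥ ((A' * D + D * A'ᴴ) *ᵥ v) with ht
  have hNk : ∀ k, star v ⬝ᵥ ((N' k * D * (N' k)ᴴ) *ᵥ v)
      = ((∑ j, σ j * normSq (((N' k)ᴴ *ᵥ v) j) : ℝ) : ℂ) := by
    intro k; rw [hD, quad_MDMH]; push_cast; rfl
  have hB : star v ⬝ᵥ ((B' * B'ᴴ) *ᵥ v) = ((∑ j, normSq ((B'ᴴ *ᵥ v) j) : ℝ) : ℂ) := by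
    rw [quad_MMH]; push_cast; rfl
  set R : ℝ := (∑ k, ∑ j, σ j * normSq (((N' k)ᴴ *ᵥ v) j)) + ∑ j, normSq ((B'ᴴ *ᵥ v) j)
    with hR
  have h0 : t + (R : ℂ) = 0 := by
    have h' := congrArg (fun M : Matrix ι ι ℂ => star v ⬝ᵥ (M *ᵥ v)) h
    simp only [Matrix.add_mulVec, dotProduct_add, Matrix.zero_mulVec, dotProduct_zero] at h'
    rw [sum_mulVec', dotProduct_sum'] at h'
    simp only [hNk, hB] at h'
    rw [ht, hR, Complex.ofReal_add, Complex.ofReal_sum]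
    simp only [Matrix.add_mulVec, dotProduct_add]
    linear_combination h'
  have hRnonneg : 0 ≤ R := by
    apply add_nonneg
    · apply Finset.sum_nonneg; intro k _
      apply Finset.sum_nonneg; intro j _
      exact mul_nonneg (hσ j).le (normSq_nonneg _)
    · exact Finset.sum_nonneg fun j _ => normSq_nonneg _
  have htre : t.re = -R := by
    have := congrArg Complex.re h0
    simp only [Complex.add_re, Complex.ofReal_re, Complex.zero_re] at this
    linarith
  have hR0 : R = 0 := le_antisymm (by rw [htre] at hre; linarith) hRnonneg
  have htre0 : t.re = 0 := by rw [htre, hR0, neg_zero]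
  refine ⟨htre0, ?_⟩
  -- each quadratic piece vanishes
  have hsplit : (∑ k, ∑ j, σ j * normSq (((N' k)ᴴ *ᵥ v) j)) = 0 ∧
      (∑ j, normSq ((B'ᴴ *ᵥ v) j)) = 0 := by
    constructor <;>
    · have h1 : 0 ≤ (∑ k : μ', ∑ j, σ j * normSq (((N' k)ᴴ *ᵥ v) j)) := by
        apply Finset.sum_nonneg; intro k _
        apply Finset.sum_nonneg; intro j _
        exact mul_nonneg (hσ j).le (normSq_nonneg _)
      have h2 : 0 ≤ (∑ j, normSq ((B'ᴴ *ᵥ v) j)) :=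
        Finset.sum_nonneg fun j _ => normSq_nonneg _
      rw [hR] at hR0
      linarith
  have hNzero : ∀ k, (N' k)ᴴ *ᵥ v = 0 := by
    intro k
    funext j
    have h1 := (Finset.sum_eq_zero_iff_of_nonneg (fun k _ => Finset.sum_nonneg fun j _ =>
      mul_nonneg (hσ j).le (normSq_nonneg _))).mp hsplit.1 k (Finset.mem_univ k)
    have h2 := (Finset.sum_eq_zero_iff_of_nonneg (fun j _ =>
      mul_nonneg (hσ j).le (normSq_nonneg _))).mp h1 j (Finset.mem_univ j)
    have h3 : normSq (((N' k)ᴴ *ᵥ v) j) = 0 := by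
      rcases mul_eq_zero.mp h2 with h | h
      · exact absurd h (hσ j).ne'
      · exact h
    simpa using normSq_eq_zero.mp h3
  have hBzero : B'ᴴ *ᵥ v = 0 := by
    funext j
    have h2 := (Finset.sum_eq_zero_iff_of_nonneg (fun j _ => normSq_nonneg _)).mp hsplit.2
      j (Finset.mem_univ j)
    simpa using normSq_eq_zero.mp h2
  have h' := congrArg (fun M : Matrix ι ι ℂ => M *ᵥ v) h
  simp only [Matrix.add_mulVec, Matrix.zero_mulVec] at h'
  rw [sum_mulVec'] at h'
  have hz1 : ∀ k, (N' k * D * (N' k)ᴴ) *ᵥ v = 0 := by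
    intro k
    rw [← Matrix.mulVec_mulVec, ← Matrix.mulVec_mulVec, hNzero k, Matrix.mulVec_zero,
      Matrix.mulVec_zero]
  have hz2 : (B' * B'ᴴ) *ᵥ v = 0 := by
    rw [← Matrix.mulVec_mulVec, hBzero, Matrix.mulVec_zero]
  simp only [hz1, hz2, Finset.sum_const_zero, add_zero] at h'
  have : (A' * D) *ᵥ v = -((D * A'ᴴ) *ᵥ v) := by
    rw [eq_neg_iff_add_eq_zero]; exact h'
  rw [← Matrix.mulVec_mulVec, ← Matrix.mulVec_mulVec] at this
  exact this

lemma mulVec_elim {n₁ n₂ : Type*} [Fintype n₁] [Fintype n₂]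
    (M : Matrix (n₁ ⊕ n₂) (n₁ ⊕ n₂) ℂ) (x : n₁ → ℂ) (y : n₂ → ℂ) :
    M *ᵥ Sum.elim x y = Sum.elim (M.toBlocks₁₁ *ᵥ x + M.toBlocks₁₂ *ᵥ y)
      (M.toBlocks₂₁ *ᵥ x + M.toBlocks₂₂ *ᵥ y) := by
  conv_lhs => rw [← fromBlocks_toBlocks M]
  rw [show (Sum.elim x y : n₁ ⊕ n₂ → ℂ) = x ⊕ᵥ y from rfl, fromBlocks_mulVec]
  simp [Sum.elim_comp_inl, Sum.elim_comp_inr]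

lemma diag_mulVec_elim {n₁ n₂ : Type*} [Fintype n₁] [Fintype n₂] [DecidableEq n₁] [DecidableEq n₂]
    (c : n₁ ⊕ n₂ → ℂ) (x : n₁ → ℂ) (y : n₂ → ℂ) :
    diagonal c *ᵥ Sum.elim x y
      = Sum.elim (fun i => c (Sum.inl i) * x i) (fun j => c (Sum.inr j) * y j) := by
  funext i
  cases i <;> simp [mulVec_diagonal]

lemma elim_eq_iff {n₁ n₂ : Type*} {a c : n₁ → ℂ} {b d : n₂ → ℂ} :
    Sum.elim a b = Sum.elim c d ↔ a = c ∧ b = d := by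
  constructor
  · intro h
    constructor
    · funext i; exact congrFun h (Sum.inl i)
    · funext j; exact congrFun h (Sum.inr j)
  · rintro ⟨rfl, rfl⟩; rfl

lemma elim_eq_zero_iff {n₁ n₂ : Type*} {a : n₁ → ℂ} {b : n₂ → ℂ} :
    Sum.elim a b = 0 ↔ a = 0 ∧ b = 0 := by
  rw [show (0 : n₁ ⊕ n₂ → ℂ) = Sum.elim (0 : n₁ → ℂ) (0 : n₂ → ℂ) by funext i; cases i <;> rfl,
    elim_eq_iff]

lemma smul_elim {n₁ n₂ : Type*} (c : ℂ) (a : n₁ → ℂ) (b : n₂ → ℂ) :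
    c • Sum.elim a b = Sum.elim (c • a) (c • b) := by
  funext i; cases i <;> rfl

lemma mem_spectrum_iff_eig {ι : Type*} [Fintype ι] [DecidableEq ι]
    (M : Matrix ι ι ℂ) (μ : ℂ) :
    μ ∈ spectrum ℂ M ↔ ∃ v, v ≠ 0 ∧ M *ᵥ v = μ • v := by
  rw [spectrum.mem_iff, Matrix.isUnit_iff_isUnit_det, isUnit_iff_ne_zero, not_not,
    ← Matrix.exists_mulVec_eq_zero_iff]
  have halg : ∀ v : ι → ℂ, (algebraMap ℂ (Matrix ι ι ℂ) μ) *ᵥ v = μ • v := by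
    intro v; funext i
    simp [Matrix.algebraMap_eq_diagonal, mulVec_diagonal, Pi.algebraMap_apply,
      Algebra.algebraMap_self_apply]
  constructor
  · rintro ⟨v, hv, he⟩
    refine ⟨v, hv, ?_⟩
    rw [Matrix.sub_mulVec, halg] at he
    exact (sub_eq_zero.mp he).symm
  · rintro ⟨v, hv, he⟩
    refine ⟨v, hv, ?_⟩
    rw [Matrix.sub_mulVec, halg, he, sub_self]

lemma conj_mem_spectrum {ι : Type*} [Fintype ι] [DecidableEq ι]
    {M : Matrix ι ι ℂ} {μ : ℂ} (h : μ ∈ spectrum ℂ M) :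
    (starRingEnd ℂ) μ ∈ spectrum ℂ Mᴴ := by
  rw [spectrum.mem_iff, Matrix.isUnit_iff_isUnit_det, isUnit_iff_ne_zero, not_not] at h ⊢
  have heq : (algebraMap ℂ (Matrix ι ι ℂ) ((starRingEnd ℂ) μ) - Mᴴ)
      = (algebraMap ℂ (Matrix ι ι ℂ) μ - M)ᴴ := by
    rw [conjTranspose_sub]
    congr 1
    rw [Matrix.algebraMap_eq_diagonal, Matrix.algebraMap_eq_diagonal, diagonal_conjTranspose]
    congr 1
  rw [heq, Matrix.det_conjTranspose, h, star_zero]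

lemma toBlocks₁₁_conjTranspose {n₁ n₂ : Type*} (M : Matrix (n₁ ⊕ n₂) (n₁ ⊕ n₂) ℂ) :
    (Mᴴ).toBlocks₁₁ = (M.toBlocks₁₁)ᴴ := rfl
lemma toBlocks₁₂_conjTranspose {n₁ n₂ : Type*} (M : Matrix (n₁ ⊕ n₂) (n₁ ⊕ n₂) ℂ) :
    (Mᴴ).toBlocks₁₂ = (M.toBlocks₂₁)ᴴ := rfl
lemma toBlocks₂₁_conjTranspose {n₁ n₂ : Type*} (M : Matrix (n₁ ⊕ n₂) (n₁ ⊕ n₂) ℂ) :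
    (Mᴴ).toBlocks₂₁ = (M.toBlocks₁₂)ᴴ := rfl
lemma toBlocks₂₂_conjTranspose {n₁ n₂ : Type*} (M : Matrix (n₁ ⊕ n₂) (n₁ ⊕ n₂) ℂ) :
    (Mᴴ).toBlocks₂₂ = (M.toBlocks₂₂)ᴴ := rfl

lemma dot_conj {ι : Type*} [Fintype ι] (M : Matrix ι ι ℂ) (x : ι → ℂ) :
    star x ⬝ᵥ (M *ᵥ x) = starRingEnd ℂ (star x ⬝ᵥ (Mᴴ *ᵥ x)) := by
  simp only [dotProduct, mulVec, Pi.star_apply, map_sum, _root_.map_mul, Finset.mul_sum,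
    Matrix.conjTranspose_apply, Complex.conj_conj, RCLike.star_def]
  rw [Finset.sum_comm]
  apply Finset.sum_congr rfl; intro i _
  apply Finset.sum_congr rfl; intro j _
  ring

lemma dot_sigma {n₁ : Type*} [Fintype n₁] (c : n₁ → ℝ) (v : n₁ → ℂ) :
    star v ⬝ᵥ (fun i => (c i : ℂ) * v i) = ((∑ i, c i * normSq (v i) : ℝ) : ℂ) := by
  simp only [dotProduct, Pi.star_apply, RCLike.star_def]
  push_cast
  apply Finset.sum_congr rfl; intro i _
  rw [Complex.normSq_eq_conj_mul_self]
  ring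

end BalancedSchur

set_option maxHeartbeats 4000000 in
open BalancedSchur in
/-- Stability of the lower-right block of a balanced bilinear system:
if the system `(A, N₁, …, N_m, B, C)` is balanced with Hankel singular value
matrix `Σ = diagonal σ` (all `σ i > 0`), `A` is Hurwitz, `(A, B)` is
controllable, `(A, C)` is observable, and the two groups of singular values
are disjoint, then `A₂₂` is invertible and the Schur complement
`A₁₁ − A₁₂ A₂₂⁻¹ A₂₁` is Hurwitz. -/
theorem balanced_schurComplement_hurwitz
    (d₁ d₂ m l : ℕ) (hd₁ : 1 ≤ d₁) (hd₂ : 1 ≤ d₂)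
    (A : Matrix (Fin d₁ ⊕ Fin d₂) (Fin d₁ ⊕ Fin d₂) ℂ)
    (N : Fin m → Matrix (Fin d₁ ⊕ Fin d₂) (Fin d₁ ⊕ Fin d₂) ℂ)
    (B : Matrix (Fin d₁ ⊕ Fin d₂) (Fin m) ℂ)
    (C : Matrix (Fin l) (Fin d₁ ⊕ Fin d₂) ℂ)
    (σ : Fin d₁ ⊕ Fin d₂ → ℝ) (hσ : ∀ i, 0 < σ i)
    (hHurwitz : ∀ μ ∈ spectrum ℂ A, μ.re < 0)
    (hLyapP : A * Matrix.diagonal (fun i => (σ i : ℂ)) +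
        Matrix.diagonal (fun i => (σ i : ℂ)) * Aᴴ +
        (∑ k, N k * Matrix.diagonal (fun i => (σ i : ℂ)) * (N k)ᴴ) + B * Bᴴ = 0)
    (hLyapQ : Aᴴ * Matrix.diagonal (fun i => (σ i : ℂ)) +
        Matrix.diagonal (fun i => (σ i : ℂ)) * A +
        (∑ k, (N k)ᴴ * Matrix.diagonal (fun i => (σ i : ℂ)) * N k) + Cᴴ * C = 0)
    (hctrb : (Matrix.of fun (i : Fin d₁ ⊕ Fin d₂) (p : Fin (d₁ + d₂) × Fin m) =>
        (A ^ (p.1 : ℕ) * B) i p.2).rank = d₁ + d₂)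
    (hobs : (Matrix.of fun (i : Fin d₁ ⊕ Fin d₂) (p : Fin (d₁ + d₂) × Fin l) =>
        (Aᴴ ^ (p.1 : ℕ) * Cᴴ) i p.2).rank = d₁ + d₂)
    (hdisj : ∀ (i : Fin d₁) (j : Fin d₂), σ (Sum.inl i) ≠ σ (Sum.inr j)) :
    IsUnit A.toBlocks₂₂ ∧
      ∀ μ ∈ spectrum ℂ (A.toBlocks₁₁ - A.toBlocks₁₂ * A.toBlocks₂₂⁻¹ * A.toBlocks₂₁),
        μ.re < 0 := by
  classical
  set D : Matrix (Fin d₁ ⊕ Fin d₂) (Fin d₁ ⊕ Fin d₂) ℂ :=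
    Matrix.diagonal (fun i => (σ i : ℂ)) with hDdef
  have hDH : Dᴴ = D := by
    have hst : (star fun i : Fin d₁ ⊕ Fin d₂ => ((σ i : ℂ))) = (fun i => ((σ i : ℂ))) := by
      funext i
      simp [Pi.star_apply, RCLike.star_def, Complex.conj_ofReal]
    rw [hDdef, Matrix.diagonal_conjTranspose, hst]
  have hLyapQ' : Aᴴ * D + D * (Aᴴ)ᴴ + (∑ k, (N k)ᴴ * D * ((N k)ᴴ)ᴴ) + Cᴴ * (Cᴴ)ᴴ = 0 := by
    simpa [Matrix.conjTranspose_conjTranspose] using hLyapQ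
  -- elementary Sum.elim arithmetic
  have neg_elim : ∀ (a : Fin d₁ → ℂ) (b : Fin d₂ → ℂ),
      -(Sum.elim a b) = Sum.elim (-a) (-b) := by
    intro a b; funext i; cases i <;> rfl
  have star_elim : ∀ (a : Fin d₁ → ℂ) (b : Fin d₂ → ℂ),
      star (Sum.elim a b) = Sum.elim (star a) (star b) := by
    intro a b; funext i; cases i <;> rfl
  have hD0w : ∀ w : Fin d₂ → ℂ, D *ᵥ Sum.elim (0 : Fin d₁ → ℂ) w
      = Sum.elim (0 : Fin d₁ → ℂ) (fun j => (σ (Sum.inr j) : ℂ) * w j) := by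
    intro w
    funext i
    cases i <;> simp [hDdef, Matrix.mulVec_diagonal]
  have hDw0 : ∀ f : Fin d₁ → ℂ, D *ᵥ Sum.elim f (0 : Fin d₂ → ℂ)
      = Sum.elim (fun i => (σ (Sum.inl i) : ℂ) * f i) (0 : Fin d₂ → ℂ) := by
    intro f
    funext i
    cases i <;> simp [hDdef, Matrix.mulVec_diagonal]
  -- Part 1 : A₂₂ is invertible
  have stepP : ∀ w : Fin d₂ → ℂ, (Aᴴ).toBlocks₂₂ *ᵥ w = 0 →
      A *ᵥ (D *ᵥ Sum.elim 0 w) = -(D *ᵥ Sum.elim ((Aᴴ).toBlocks₁₂ *ᵥ w) 0) := by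
    intro w hw
    have hAHe : Aᴴ *ᵥ Sum.elim (0 : Fin d₁ → ℂ) w = Sum.elim ((Aᴴ).toBlocks₁₂ *ᵥ w) 0 := by
      rw [mulVec_elim]
      simp [hw]
    have h2 : star (Sum.elim (0 : Fin d₁ → ℂ) w) ⬝ᵥ
        ((D * Aᴴ) *ᵥ Sum.elim (0 : Fin d₁ → ℂ) w) = 0 := by
      rw [← Matrix.mulVec_mulVec, hAHe, hDw0, star_elim, sumElim_dotProduct_sumElim]
      simp
    have h1 : star (Sum.elim (0 : Fin d₁ → ℂ) w) ⬝ᵥ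
        ((A * D) *ᵥ Sum.elim (0 : Fin d₁ → ℂ) w) = 0 := by
      rw [dot_conj, show (A * D)ᴴ = D * Aᴴ by rw [Matrix.conjTranspose_mul, hDH], h2, map_zero]
    have hk := key σ hσ A N B hLyapP (Sum.elim 0 w)
      (by rw [Matrix.add_mulVec, dotProduct_add, ← hDdef, h1, h2]; norm_num)
    rw [hAHe] at hk
    exact hk.2
  have stepQ : ∀ (u : Fin d₂ → ℂ) (g : Fin d₁ → ℂ), A *ᵥ Sum.elim 0 u = Sum.elim g 0 →
      Aᴴ *ᵥ (D *ᵥ Sum.elim 0 u) = -(D *ᵥ Sum.elim g 0) := by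
    intro u g hu
    have h2 : star (Sum.elim (0 : Fin d₁ → ℂ) u) ⬝ᵥ
        ((D * A) *ᵥ Sum.elim (0 : Fin d₁ → ℂ) u) = 0 := by
      rw [← Matrix.mulVec_mulVec, hu, hDw0, star_elim, sumElim_dotProduct_sumElim]
      simp
    have h1 : star (Sum.elim (0 : Fin d₁ → ℂ) u) ⬝ᵥ
        ((Aᴴ * D) *ᵥ Sum.elim (0 : Fin d₁ → ℂ) u) = 0 := by
      rw [dot_conj, show (Aᴴ * D)ᴴ = D * A by
        rw [Matrix.conjTranspose_mul, hDH, Matrix.conjTranspose_conjTranspose], h2, map_zero]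
    have hk := key σ hσ Aᴴ (fun k => (N k)ᴴ) Cᴴ hLyapQ' (Sum.elim 0 u)
      (by rw [Matrix.add_mulVec, dotProduct_add, ← hDdef, Matrix.conjTranspose_conjTranspose,
        h1, h2]; norm_num)
    have := hk.2
    rw [Matrix.conjTranspose_conjTranspose, hu] at this
    exact this
  have hA22 : IsUnit A.toBlocks₂₂ := by
    by_contra hnot
    rw [Matrix.isUnit_iff_isUnit_det, isUnit_iff_ne_zero, not_not] at hnot
    have hdetH : ((Aᴴ).toBlocks₂₂).det = 0 := by
      rw [toBlocks₂₂_conjTranspose, Matrix.det_conjTranspose, hnot, star_zero]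
    obtain ⟨v, hv0, hvker⟩ := Matrix.exists_mulVec_eq_zero_iff.mpr hdetH
    -- invariance of the kernel under Σ₂²
    have hinv : ∀ w : Fin d₂ → ℂ, (Aᴴ).toBlocks₂₂ *ᵥ w = 0 →
        (Aᴴ).toBlocks₂₂ *ᵥ (fun j => (σ (Sum.inr j) : ℂ) * (σ (Sum.inr j) : ℂ) * w j) = 0 := by
      intro w hw
      have h1 := stepP w hw
      rw [hD0w, hDw0, neg_elim, neg_zero] at h1
      have h2 := stepQ (fun j => (σ (Sum.inr j) : ℂ) * w j)
        (-(fun i => (σ (Sum.inl i) : ℂ) * ((Aᴴ).toBlocks₁₂ *ᵥ w) i)) h1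
      rw [hD0w] at h2
      rw [mulVec_elim] at h2
      rw [hDw0, neg_elim, neg_zero] at h2
      have h3 := (elim_eq_iff.mp h2).2
      simp only [Matrix.mulVec_zero, zero_add] at h3
      rw [show (fun j => (σ (Sum.inr j) : ℂ) * (σ (Sum.inr j) : ℂ) * w j)
        = (fun j => (σ (Sum.inr j) : ℂ) * ((σ (Sum.inr j) : ℂ) * w j)) by
          funext j; ring]
      exact h3
    -- find an eigenvector of Σ₂² inside the kernel
    set M₂ : Matrix (Fin d₂) (Fin d₂) ℂ := (Aᴴ).toBlocks₂₂ with hM₂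
    set K : Submodule ℂ (Fin d₂ → ℂ) := LinearMap.ker M₂.mulVecLin with hK
    set Dsq : Matrix (Fin d₂) (Fin d₂) ℂ :=
      Matrix.diagonal (fun j => (σ (Sum.inr j) : ℂ) * (σ (Sum.inr j) : ℂ)) with hDsq
    have hKinv : ∀ x ∈ K, Dsq.mulVecLin x ∈ K := by
      intro x hx
      simp only [hK, LinearMap.mem_ker, Matrix.mulVecLin_apply] at hx ⊢
      have hde : Dsq *ᵥ x = fun j => (σ (Sum.inr j) : ℂ) * (σ (Sum.inr j) : ℂ) * x j := by
        funext j; rw [hDsq]; exact Matrix.mulVec_diagonal _ _ _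
      rw [hde]
      exact hinv x hx
    have hvK : v ∈ K := by rw [hK, LinearMap.mem_ker, Matrix.mulVecLin_apply]; exact hvker
    have : Nontrivial K := by
      refine ⟨⟨⟨v, hvK⟩, 0, ?_⟩⟩
      intro h
      apply hv0
      simpa using congrArg Subtype.val h
    obtain ⟨c, hc⟩ := Module.End.exists_eigenvalue (Dsq.mulVecLin.restrict hKinv)
    obtain ⟨v₀', hv₀'⟩ := hc.exists_hasEigenvector
    set v₀ : Fin d₂ → ℂ := (v₀' : Fin d₂ → ℂ) with hv₀def
    have hv₀ne : v₀ ≠ 0 := by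
      intro h
      have h' : (v₀' : Fin d₂ → ℂ) = 0 := h
      exact hv₀'.2 (Subtype.ext (by simp [h']))
    have heig : ∀ j, (σ (Sum.inr j) : ℂ) * (σ (Sum.inr j) : ℂ) * v₀ j = c * v₀ j := by
      have h1 := hv₀'.apply_eq_smul
      have h2 := congrArg Subtype.val h1
      rw [LinearMap.restrict_apply] at h2
      intro j
      have h3 := congrFun h2 j
      simpa [Matrix.mulVecLin_apply, Matrix.mulVec_diagonal, hDsq] using h3
    obtain ⟨j₀, hj₀0⟩ := Function.ne_iff.mp hv₀ne
    have hj₀ : v₀ j₀ ≠ 0 := by simpa using hj₀0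
    have hc' : c = (σ (Sum.inr j₀) : ℂ) * (σ (Sum.inr j₀) : ℂ) :=
      (mul_right_cancel₀ hj₀ (heig j₀)).symm
    have hSv0 : ∀ j, (σ (Sum.inr j) : ℂ) * v₀ j = (σ (Sum.inr j₀) : ℂ) * v₀ j := by
      intro j
      by_cases hj : v₀ j = 0
      · rw [hj, mul_zero, mul_zero]
      · have h1 : (σ (Sum.inr j) : ℂ) * (σ (Sum.inr j) : ℂ)
            = (σ (Sum.inr j₀) : ℂ) * (σ (Sum.inr j₀) : ℂ) := by
          have := heig j
          rw [hc'] at this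
          exact mul_right_cancel₀ hj this
        have h2 : σ (Sum.inr j) * σ (Sum.inr j) = σ (Sum.inr j₀) * σ (Sum.inr j₀) := by
          exact_mod_cast h1
        have h3 : σ (Sum.inr j) = σ (Sum.inr j₀) := by
          nlinarith [hσ (Sum.inr j), hσ (Sum.inr j₀)]
        rw [h3]
    have hDv₀ : D *ᵥ Sum.elim (0 : Fin d₁ → ℂ) v₀
        = (σ (Sum.inr j₀) : ℂ) • Sum.elim (0 : Fin d₁ → ℂ) v₀ := by
      rw [hD0w]
      funext i
      cases i with
      | inl i => simp
      | inr j => simpa using hSv0 j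
    have hv₀K : M₂ *ᵥ v₀ = 0 := by
      have h := v₀'.2
      simp only [hK, LinearMap.mem_ker, Matrix.mulVecLin_apply] at h
      exact h
    -- run the chain once more on v₀
    set w' : Fin d₁ → ℂ := (Aᴴ).toBlocks₁₂ *ᵥ v₀ with hw'
    have hP := stepP v₀ hv₀K
    rw [hDv₀, Matrix.mulVec_smul, hDw0, neg_elim, neg_zero] at hP
    have hσ₀ne : (σ (Sum.inr j₀) : ℂ) ≠ 0 := by
      exact_mod_cast (hσ (Sum.inr j₀)).ne'
    have hAe₀ : A *ᵥ Sum.elim (0 : Fin d₁ → ℂ) v₀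
        = Sum.elim ((σ (Sum.inr j₀) : ℂ)⁻¹ • (-(fun i => (σ (Sum.inl i) : ℂ) * w' i))) 0 := by
      have := congrArg (fun x => (σ (Sum.inr j₀) : ℂ)⁻¹ • x) hP
      simp only [inv_smul_smul₀ hσ₀ne] at this
      rw [this, smul_elim, smul_zero]
    have hQ := stepQ v₀ _ hAe₀
    rw [hDv₀, Matrix.mulVec_smul, hDw0, neg_elim, neg_zero] at hQ
    have hAHe₀ : Aᴴ *ᵥ Sum.elim (0 : Fin d₁ → ℂ) v₀ = Sum.elim w' 0 := by
      rw [mulVec_elim, show (Aᴴ).toBlocks₂₂ *ᵥ v₀ = 0 from hv₀K]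
      simp [hv₀K, hw']
    rw [hAHe₀, smul_elim, smul_zero] at hQ
    have hinl := (elim_eq_iff.mp hQ).1
    have hw'0 : w' = 0 := by
      funext i
      have h1 := congrFun hinl i
      simp only [Pi.smul_apply, Pi.neg_apply, smul_eq_mul] at h1
      -- h1 : σ₀ * w' i = -(σ₁ᵢ * (σ₀⁻¹ * -(σ₁ᵢ * w' i)))
      by_contra hwne
      have h2 : (σ (Sum.inr j₀) : ℂ) * (σ (Sum.inr j₀) : ℂ) * w' i
          = (σ (Sum.inl i) : ℂ) * (σ (Sum.inl i) : ℂ) * w' i := by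
        field_simp at h1
        linear_combination h1
      have h3 : (σ (Sum.inr j₀) : ℂ) * (σ (Sum.inr j₀) : ℂ)
          = (σ (Sum.inl i) : ℂ) * (σ (Sum.inl i) : ℂ) := mul_right_cancel₀ hwne h2
      have h4 : σ (Sum.inr j₀) * σ (Sum.inr j₀) = σ (Sum.inl i) * σ (Sum.inl i) := by
        exact_mod_cast h3
      have h5 : σ (Sum.inl i) ≠ σ (Sum.inr j₀) := hdisj i j₀
      rcases mul_self_eq_mul_self_iff.mp h4 with h6 | h6
      · exact h5 h6.symm
      · nlinarith [hσ (Sum.inr j₀), hσ (Sum.inl i)]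
    have hAv₀0 : A *ᵥ Sum.elim (0 : Fin d₁ → ℂ) v₀ = 0 := by
      rw [hAe₀, hw'0]
      funext i
      cases i <;> simp
    have he₀ne : Sum.elim (0 : Fin d₁ → ℂ) v₀ ≠ 0 := by
      intro h
      exact hj₀ (by simpa using congrFun h (Sum.inr j₀))
    have h0spec : (0 : ℂ) ∈ spectrum ℂ A := by
      rw [mem_spectrum_iff_eig]
      exact ⟨Sum.elim 0 v₀, he₀ne, by rw [hAv₀0, zero_smul]⟩
    have := hHurwitz 0 h0spec
    simp at this
  refine ⟨hA22, ?_⟩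
  have hDelim : ∀ (a : Fin d₁ → ℂ) (b : Fin d₂ → ℂ), D *ᵥ Sum.elim a b
      = Sum.elim (fun i => (σ (Sum.inl i) : ℂ) * a i) (fun j => (σ (Sum.inr j) : ℂ) * b j) := by
    intro a b
    rw [hDdef, diag_mulVec_elim]
  have hdet22 : IsUnit (A.toBlocks₂₂).det := (Matrix.isUnit_iff_isUnit_det _).mp hA22
  have hdet22H : IsUnit ((Aᴴ).toBlocks₂₂).det := by
    rw [toBlocks₂₂_conjTranspose, Matrix.det_conjTranspose]
    exact hdet22.star
  set S : Matrix (Fin d₁) (Fin d₁) ℂ :=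
    A.toBlocks₁₁ - A.toBlocks₁₂ * A.toBlocks₂₂⁻¹ * A.toBlocks₂₁ with hSdef
  set T : Matrix (Fin d₁) (Fin d₁) ℂ := Sᴴ with hTdef
  have hTalt : T = (Aᴴ).toBlocks₁₁ - (Aᴴ).toBlocks₁₂ * ((Aᴴ).toBlocks₂₂)⁻¹ * (Aᴴ).toBlocks₂₁ := by
    rw [hTdef, hSdef, Matrix.conjTranspose_sub, Matrix.conjTranspose_mul, Matrix.conjTranspose_mul,
      Matrix.conjTranspose_nonsing_inv, toBlocks₁₁_conjTranspose, toBlocks₁₂_conjTranspose,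
      toBlocks₂₁_conjTranspose, toBlocks₂₂_conjTranspose, Matrix.mul_assoc]
  intro μ hμ
  by_contra hre0'
  push_neg at hre0'
  set lam : ℂ := (starRingEnd ℂ) μ with hlam
  have hlam_re : lam.re = μ.re := by rw [hlam]; exact Complex.conj_re μ
  have hlamT : lam ∈ spectrum ℂ T := by rw [hTdef]; exact conj_mem_spectrum hμ
  obtain ⟨v, hvne, hveig⟩ := (mem_spectrum_iff_eig T lam).mp hlamT
  set Z : (Fin d₁ → ℂ) → (Fin d₁ ⊕ Fin d₂ → ℂ) :=
    fun p => Sum.elim p (-(((Aᴴ).toBlocks₂₂)⁻¹ *ᵥ ((Aᴴ).toBlocks₂₁ *ᵥ p))) with hZdef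
  set Y : (Fin d₁ → ℂ) → (Fin d₁ ⊕ Fin d₂ → ℂ) :=
    fun p => Sum.elim p (-(A.toBlocks₂₂⁻¹ *ᵥ (A.toBlocks₂₁ *ᵥ p))) with hYdef
  have hZp : ∀ p : Fin d₁ → ℂ,
      Z p = Sum.elim p (-(((Aᴴ).toBlocks₂₂)⁻¹ *ᵥ ((Aᴴ).toBlocks₂₁ *ᵥ p))) := by
    intro p; rw [hZdef]
  have hYp : ∀ p : Fin d₁ → ℂ,
      Y p = Sum.elim p (-(A.toBlocks₂₂⁻¹ *ᵥ (A.toBlocks₂₁ *ᵥ p))) := by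
    intro p; rw [hYdef]
  have hZsmul : ∀ (c : ℂ) (p : Fin d₁ → ℂ), Z (c • p) = c • Z p := by
    intro c p
    rw [hZp, hZp]
    funext i
    cases i with
    | inl i => simp
    | inr j =>
      simp only [Sum.elim_inr, Pi.smul_apply, Pi.neg_apply, smul_eq_mul, Matrix.mulVec_smul]
      ring
  have hYsmul : ∀ (c : ℂ) (p : Fin d₁ → ℂ), Y (c • p) = c • Y p := by
    intro c p
    rw [hYp, hYp]
    funext i
    cases i with
    | inl i => simp
    | inr j =>
      simp only [Sum.elim_inr, Pi.smul_apply, Pi.neg_apply, smul_eq_mul, Matrix.mulVec_smul]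
      ring
  have hAZ : ∀ p, Aᴴ *ᵥ Z p = Sum.elim (T *ᵥ p) 0 := by
    intro p
    rw [hZp, mulVec_elim]
    refine elim_eq_iff.mpr ⟨?_, ?_⟩
    · rw [hTalt, Matrix.sub_mulVec, Matrix.mulVec_neg, ← Matrix.mulVec_mulVec,
        ← Matrix.mulVec_mulVec, sub_eq_add_neg]
    · rw [Matrix.mulVec_neg, Matrix.mulVec_mulVec, Matrix.mul_nonsing_inv _ hdet22H,
        Matrix.one_mulVec, add_neg_cancel]
  have hAY : ∀ p, A *ᵥ Y p = Sum.elim (S *ᵥ p) 0 := by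
    intro p
    rw [hYp, mulVec_elim]
    refine elim_eq_iff.mpr ⟨?_, ?_⟩
    · rw [hSdef, Matrix.sub_mulVec, Matrix.mulVec_neg, ← Matrix.mulVec_mulVec,
        ← Matrix.mulVec_mulVec, sub_eq_add_neg]
    · rw [Matrix.mulVec_neg, Matrix.mulVec_mulVec, Matrix.mul_nonsing_inv _ hdet22,
        Matrix.one_mulVec, add_neg_cancel]
  have hRZ : ∀ (x : Fin d₁ ⊕ Fin d₂ → ℂ) (q : Fin d₁ → ℂ), Aᴴ *ᵥ x = Sum.elim q 0 →
      x = Z (fun i => x (Sum.inl i)) ∧ q = T *ᵥ (fun i => x (Sum.inl i)) := by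
    intro x q hx
    have hxe : x = Sum.elim (fun i => x (Sum.inl i)) (fun j => x (Sum.inr j)) := by
      funext i; cases i <;> rfl
    have hx' := hx
    rw [hxe, mulVec_elim] at hx'
    have h2 := (elim_eq_iff.mp hx').2
    have h3 : (Aᴴ).toBlocks₂₂ *ᵥ (fun j => x (Sum.inr j))
        = -((Aᴴ).toBlocks₂₁ *ᵥ (fun i => x (Sum.inl i))) := by
      rw [eq_neg_iff_add_eq_zero, add_comm]
      exact h2
    have hx2 : (fun j => x (Sum.inr j))
        = -(((Aᴴ).toBlocks₂₂)⁻¹ *ᵥ ((Aᴴ).toBlocks₂₁ *ᵥ (fun i => x (Sum.inl i)))) := by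
      calc (fun j => x (Sum.inr j))
          = ((Aᴴ).toBlocks₂₂)⁻¹ *ᵥ ((Aᴴ).toBlocks₂₂ *ᵥ (fun j => x (Sum.inr j))) := by
            rw [Matrix.mulVec_mulVec, Matrix.nonsing_inv_mul _ hdet22H, Matrix.one_mulVec]
        _ = ((Aᴴ).toBlocks₂₂)⁻¹ *ᵥ (-((Aᴴ).toBlocks₂₁ *ᵥ (fun i => x (Sum.inl i)))) := by
            rw [h3]
        _ = -(((Aᴴ).toBlocks₂₂)⁻¹ *ᵥ ((Aᴴ).toBlocks₂₁ *ᵥ (fun i => x (Sum.inl i)))) := by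
            rw [Matrix.mulVec_neg]
    have hxZ : x = Z (fun i => x (Sum.inl i)) := by
      rw [hZp]
      conv_lhs => rw [hxe]
      rw [hx2]
    refine ⟨hxZ, ?_⟩
    have h5 := hAZ (fun i => x (Sum.inl i))
    rw [← hxZ, hx] at h5
    exact (elim_eq_iff.mp h5).1
  have hRY : ∀ (x : Fin d₁ ⊕ Fin d₂ → ℂ) (q : Fin d₁ → ℂ), A *ᵥ x = Sum.elim q 0 →
      x = Y (fun i => x (Sum.inl i)) ∧ q = S *ᵥ (fun i => x (Sum.inl i)) := by
    intro x q hx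
    have hxe : x = Sum.elim (fun i => x (Sum.inl i)) (fun j => x (Sum.inr j)) := by
      funext i; cases i <;> rfl
    have hx' := hx
    rw [hxe, mulVec_elim] at hx'
    have h2 := (elim_eq_iff.mp hx').2
    have h3 : A.toBlocks₂₂ *ᵥ (fun j => x (Sum.inr j))
        = -(A.toBlocks₂₁ *ᵥ (fun i => x (Sum.inl i))) := by
      rw [eq_neg_iff_add_eq_zero, add_comm]
      exact h2
    have hx2 : (fun j => x (Sum.inr j))
        = -(A.toBlocks₂₂⁻¹ *ᵥ (A.toBlocks₂₁ *ᵥ (fun i => x (Sum.inl i)))) := by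
      calc (fun j => x (Sum.inr j))
          = A.toBlocks₂₂⁻¹ *ᵥ (A.toBlocks₂₂ *ᵥ (fun j => x (Sum.inr j))) := by
            rw [Matrix.mulVec_mulVec, Matrix.nonsing_inv_mul _ hdet22, Matrix.one_mulVec]
        _ = A.toBlocks₂₂⁻¹ *ᵥ (-(A.toBlocks₂₁ *ᵥ (fun i => x (Sum.inl i)))) := by
            rw [h3]
        _ = -(A.toBlocks₂₂⁻¹ *ᵥ (A.toBlocks₂₁ *ᵥ (fun i => x (Sum.inl i)))) := by
            rw [Matrix.mulVec_neg]
    have hxY : x = Y (fun i => x (Sum.inl i)) := by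
      rw [hYp]
      conv_lhs => rw [hxe]
      rw [hx2]
    refine ⟨hxY, ?_⟩
    have h5 := hAY (fun i => x (Sum.inl i))
    rw [← hxY, hx] at h5
    exact (elim_eq_iff.mp h5).1
  -- positivity of the weighted norm
  have hqpos : ∀ p : Fin d₁ → ℂ, p ≠ 0 → 0 < ∑ i, σ (Sum.inl i) * normSq (p i) := by
    intro p hp
    obtain ⟨i₀, hi₀⟩ := Function.ne_iff.mp hp
    have hi₀' : p i₀ ≠ 0 := by simpa using hi₀
    apply Finset.sum_pos' (fun i _ => mul_nonneg (hσ _).le (normSq_nonneg _))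
    exact ⟨i₀, Finset.mem_univ _, mul_pos (hσ _) (normSq_pos.mpr hi₀')⟩
  -- chain P
  have chainP : ∀ p : Fin d₁ → ℂ, p ≠ 0 → T *ᵥ p = lam • p →
      lam.re = 0 ∧ D *ᵥ Z p = Y (fun i => (σ (Sum.inl i) : ℂ) * p i) ∧
        S *ᵥ (fun i => (σ (Sum.inl i) : ℂ) * p i)
          = (-lam) • fun i => (σ (Sum.inl i) : ℂ) * p i := by
    intro p hpne hpeig
    have hAZp : Aᴴ *ᵥ Z p = lam • Sum.elim p 0 := by
      rw [hAZ, hpeig, smul_elim, smul_zero]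
    have hq2 : star (Z p) ⬝ᵥ ((D * Aᴴ) *ᵥ Z p)
        = lam * ((∑ i, σ (Sum.inl i) * normSq (p i) : ℝ) : ℂ) := by
      rw [← Matrix.mulVec_mulVec, hAZp, Matrix.mulVec_smul, hDw0, dotProduct_smul, hZp,
        star_elim, sumElim_dotProduct_sumElim, dotProduct_zero, add_zero, dot_sigma,
        smul_eq_mul]
    have hq1 : star (Z p) ⬝ᵥ ((A * D) *ᵥ Z p)
        = (starRingEnd ℂ) (lam * ((∑ i, σ (Sum.inl i) * normSq (p i) : ℝ) : ℂ)) := by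
      rw [dot_conj, show (A * D)ᴴ = D * Aᴴ by rw [Matrix.conjTranspose_mul, hDH], hq2]
    have hretot : (star (Z p) ⬝ᵥ ((A * D + D * Aᴴ) *ᵥ Z p)).re
        = 2 * (lam.re * (∑ i, σ (Sum.inl i) * normSq (p i))) := by
      rw [Matrix.add_mulVec, dotProduct_add, hq1, hq2]
      simp only [Complex.add_re, Complex.conj_re, Complex.mul_re, Complex.ofReal_re,
        Complex.ofReal_im]
      ring
    have hQpos := hqpos p hpne
    have hk := key σ hσ A N B hLyapP (Z p) (by
      rw [← hDdef, hretot]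
      have h7 : 0 ≤ lam.re := by rw [hlam_re]; exact hre0'
      nlinarith)
    obtain ⟨ht0, heq⟩ := hk
    rw [← hDdef] at ht0 heq
    have hlr : lam.re = 0 := by
      rw [hretot] at ht0
      rcases mul_eq_zero.mp (by linarith : lam.re * (∑ i, σ (Sum.inl i) * normSq (p i)) = 0)
        with h | h
      · exact h
      · exact absurd h hQpos.ne'
    rw [hAZp, Matrix.mulVec_smul, hDw0] at heq
    have hrhs : -(lam • Sum.elim (fun i => (σ (Sum.inl i) : ℂ) * p i) (0 : Fin d₂ → ℂ))
        = Sum.elim ((-lam) • fun i => (σ (Sum.inl i) : ℂ) * p i) 0 := by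
      rw [smul_elim, neg_elim, smul_zero, neg_zero, neg_smul]
    rw [hrhs] at heq
    obtain ⟨hx1, hx2⟩ := hRY (D *ᵥ Z p) _ heq
    have hcomp : (fun i => (D *ᵥ Z p) (Sum.inl i)) = fun i => (σ (Sum.inl i) : ℂ) * p i := by
      rw [hZp, hDelim]
      rfl
    rw [hcomp] at hx1 hx2
    exact ⟨hlr, hx1, hx2.symm⟩
  -- chain Q
  have chainQ : ∀ p : Fin d₁ → ℂ, lam.re = 0 → S *ᵥ p = (-lam) • p →
      D *ᵥ Y p = Z (fun i => (σ (Sum.inl i) : ℂ) * p i) ∧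
        T *ᵥ (fun i => (σ (Sum.inl i) : ℂ) * p i)
          = lam • fun i => (σ (Sum.inl i) : ℂ) * p i := by
    intro p hlr hpeig
    have hAYp : A *ᵥ Y p = (-lam) • Sum.elim p 0 := by
      rw [hAY, hpeig, smul_elim, smul_zero]
    have hq2 : star (Y p) ⬝ᵥ ((D * A) *ᵥ Y p)
        = (-lam) * ((∑ i, σ (Sum.inl i) * normSq (p i) : ℝ) : ℂ) := by
      rw [← Matrix.mulVec_mulVec, hAYp, Matrix.mulVec_smul, hDw0, dotProduct_smul, hYp,
        star_elim, sumElim_dotProduct_sumElim, dotProduct_zero, add_zero, dot_sigma,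
        smul_eq_mul]
    have hq1 : star (Y p) ⬝ᵥ ((Aᴴ * D) *ᵥ Y p)
        = (starRingEnd ℂ) ((-lam) * ((∑ i, σ (Sum.inl i) * normSq (p i) : ℝ) : ℂ)) := by
      rw [dot_conj, show (Aᴴ * D)ᴴ = D * A by
        rw [Matrix.conjTranspose_mul, hDH, Matrix.conjTranspose_conjTranspose], hq2]
    have hretot : (star (Y p) ⬝ᵥ ((Aᴴ * D + D * A) *ᵥ Y p)).re
        = 2 * ((-lam).re * (∑ i, σ (Sum.inl i) * normSq (p i))) := by
      rw [Matrix.add_mulVec, dotProduct_add, hq1, hq2]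
      simp only [Complex.add_re, Complex.conj_re, Complex.mul_re, Complex.ofReal_re,
        Complex.ofReal_im]
      ring
    have hk := key σ hσ Aᴴ (fun k => (N k)ᴴ) Cᴴ hLyapQ' (Y p) (by
      rw [← hDdef, Matrix.conjTranspose_conjTranspose, hretot]
      simp [Complex.neg_re, hlr])
    obtain ⟨_, heq⟩ := hk
    rw [← hDdef, Matrix.conjTranspose_conjTranspose] at heq
    rw [hAYp, Matrix.mulVec_smul, hDw0] at heq
    have hrhs : -((-lam) • Sum.elim (fun i => (σ (Sum.inl i) : ℂ) * p i) (0 : Fin d₂ → ℂ))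
        = Sum.elim (lam • fun i => (σ (Sum.inl i) : ℂ) * p i) 0 := by
      rw [smul_elim, neg_elim, smul_zero, neg_zero, neg_smul, neg_neg]
    rw [hrhs] at heq
    obtain ⟨hx1, hx2⟩ := hRZ (D *ᵥ Y p) _ heq
    have hcomp : (fun i => (D *ᵥ Y p) (Sum.inl i)) = fun i => (σ (Sum.inl i) : ℂ) * p i := by
      rw [hYp, hDelim]
      rfl
    rw [hcomp] at hx1 hx2
    exact ⟨hx1, hx2.symm⟩
  -- eigenvector of Σ₁² inside the λ-eigenspace of T
  set V : Submodule ℂ (Fin d₁ → ℂ) :=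
    LinearMap.ker (T.mulVecLin - lam • LinearMap.id) with hV
  have hmemV : ∀ x : Fin d₁ → ℂ, x ∈ V ↔ T *ᵥ x = lam • x := by
    intro x
    rw [hV, LinearMap.mem_ker, LinearMap.sub_apply, LinearMap.smul_apply, LinearMap.id_apply,
      Matrix.mulVecLin_apply, sub_eq_zero]
  set Dsq1 : Matrix (Fin d₁) (Fin d₁) ℂ :=
    Matrix.diagonal (fun i => (σ (Sum.inl i) : ℂ) * (σ (Sum.inl i) : ℂ)) with hDsq1
  have hVinv : ∀ x ∈ V, Dsq1.mulVecLin x ∈ V := by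
    intro x hx
    rw [hmemV] at hx
    rw [hmemV, Matrix.mulVecLin_apply]
    by_cases hx0 : x = 0
    · rw [hx0]
      simp
    · obtain ⟨hlr, _, hSp⟩ := chainP x hx0 hx
      obtain ⟨_, hT2⟩ := chainQ _ hlr hSp
      have hsq : Dsq1 *ᵥ x = fun i => (σ (Sum.inl i) : ℂ) * ((σ (Sum.inl i) : ℂ) * x i) := by
        funext i
        rw [hDsq1, Matrix.mulVec_diagonal]
        ring
      rw [hsq]
      exact hT2
  have hvV : v ∈ V := (hmemV v).mpr hveig
  have hVnt : Nontrivial V := by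
    refine ⟨⟨⟨v, hvV⟩, 0, ?_⟩⟩
    intro h
    apply hvne
    simpa using congrArg Subtype.val h
  obtain ⟨c, hc⟩ := Module.End.exists_eigenvalue (Dsq1.mulVecLin.restrict hVinv)
  obtain ⟨v₀', hv₀'⟩ := hc.exists_hasEigenvector
  set v₀ : Fin d₁ → ℂ := (v₀' : Fin d₁ → ℂ) with hv₀def
  have hv₀ne : v₀ ≠ 0 := by
    intro h
    have h' : (v₀' : Fin d₁ → ℂ) = 0 := h
    exact hv₀'.2 (Subtype.ext (by simp [h']))
  have heig2 : ∀ i, (σ (Sum.inl i) : ℂ) * (σ (Sum.inl i) : ℂ) * v₀ i = c * v₀ i := by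
    have h1 := hv₀'.apply_eq_smul
    have h2 := congrArg Subtype.val h1
    rw [LinearMap.restrict_apply] at h2
    intro i
    have h3 := congrFun h2 i
    simpa [Matrix.mulVecLin_apply, Matrix.mulVec_diagonal, hDsq1] using h3
  obtain ⟨i₀, hi₀0⟩ := Function.ne_iff.mp hv₀ne
  have hi₀ : v₀ i₀ ≠ 0 := by simpa using hi₀0
  have hc' : c = (σ (Sum.inl i₀) : ℂ) * (σ (Sum.inl i₀) : ℂ) :=
    (mul_right_cancel₀ hi₀ (heig2 i₀)).symm
  have hSv1 : ∀ i, (σ (Sum.inl i) : ℂ) * v₀ i = (σ (Sum.inl i₀) : ℂ) * v₀ i := by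
    intro i
    by_cases hi : v₀ i = 0
    · rw [hi, mul_zero, mul_zero]
    · have h1 : (σ (Sum.inl i) : ℂ) * (σ (Sum.inl i) : ℂ)
          = (σ (Sum.inl i₀) : ℂ) * (σ (Sum.inl i₀) : ℂ) := by
        have := heig2 i
        rw [hc'] at this
        exact mul_right_cancel₀ hi this
      have h2 : σ (Sum.inl i) * σ (Sum.inl i) = σ (Sum.inl i₀) * σ (Sum.inl i₀) := by
        exact_mod_cast h1
      have h3 : σ (Sum.inl i) = σ (Sum.inl i₀) := by
        rcases mul_self_eq_mul_self_iff.mp h2 with h6 | h6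
        · exact h6
        · nlinarith [hσ (Sum.inl i), hσ (Sum.inl i₀)]
      rw [h3]
  have hv₀eig : T *ᵥ v₀ = lam • v₀ := (hmemV v₀).mp v₀'.2
  have hσ₀C : (fun i => (σ (Sum.inl i) : ℂ) * v₀ i) = (σ (Sum.inl i₀) : ℂ) • v₀ := by
    funext i
    rw [hSv1 i]
    simp
  obtain ⟨hlr0, hDZ0, hS0⟩ := chainP v₀ hv₀ne hv₀eig
  rw [hσ₀C] at hDZ0 hS0
  obtain ⟨hDY0, _⟩ := chainQ ((σ (Sum.inl i₀) : ℂ) • v₀) hlr0 hS0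
  have harg : (fun i => (σ (Sum.inl i) : ℂ) * ((σ (Sum.inl i₀) : ℂ) • v₀) i)
      = ((σ (Sum.inl i₀) : ℂ) * (σ (Sum.inl i₀) : ℂ)) • v₀ := by
    funext i
    simp only [Pi.smul_apply, smul_eq_mul]
    rw [show (σ (Sum.inl i) : ℂ) * ((σ (Sum.inl i₀) : ℂ) * v₀ i)
      = (σ (Sum.inl i₀) : ℂ) * ((σ (Sum.inl i) : ℂ) * v₀ i) by ring, hSv1 i]
    ring
  rw [harg, hZsmul, hYsmul, Matrix.mulVec_smul, mul_smul] at hDY0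
  have hσ₀ne : (σ (Sum.inl i₀) : ℂ) ≠ 0 := by
    exact_mod_cast (hσ (Sum.inl i₀)).ne'
  have hDY1 : D *ᵥ Y v₀ = (σ (Sum.inl i₀) : ℂ) • Z v₀ :=
    smul_right_injective _ hσ₀ne hDY0
  rw [hYsmul] at hDZ0
  have hDD : D *ᵥ (D *ᵥ Z v₀) = ((σ (Sum.inl i₀) : ℂ) * (σ (Sum.inl i₀) : ℂ)) • Z v₀ := by
    rw [hDZ0, Matrix.mulVec_smul, hDY1, ← mul_smul]
  have hu0 : ∀ j, Z v₀ (Sum.inr j) = 0 := by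
    intro j
    by_contra hne
    have h1 := congrFun hDD (Sum.inr j)
    have h2 : (σ (Sum.inr j) : ℂ) * ((σ (Sum.inr j) : ℂ) * (Z v₀ (Sum.inr j)))
        = ((σ (Sum.inl i₀) : ℂ) * (σ (Sum.inl i₀) : ℂ)) * (Z v₀ (Sum.inr j)) := by
      simpa [hDdef, Matrix.mulVec_diagonal, Pi.smul_apply, smul_eq_mul] using h1
    have h3 : (σ (Sum.inr j) : ℂ) * (σ (Sum.inr j) : ℂ)
        = (σ (Sum.inl i₀) : ℂ) * (σ (Sum.inl i₀) : ℂ) := by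
      have h4 : (σ (Sum.inr j) : ℂ) * (σ (Sum.inr j) : ℂ) * (Z v₀ (Sum.inr j))
          = ((σ (Sum.inl i₀) : ℂ) * (σ (Sum.inl i₀) : ℂ)) * (Z v₀ (Sum.inr j)) := by
        rw [← h2]; ring
      exact mul_right_cancel₀ hne h4
    have h5 : σ (Sum.inr j) * σ (Sum.inr j) = σ (Sum.inl i₀) * σ (Sum.inl i₀) := by
      exact_mod_cast h3
    rcases mul_self_eq_mul_self_iff.mp h5 with h6 | h6
    · exact hdisj i₀ j h6.symm
    · nlinarith [hσ (Sum.inr j), hσ (Sum.inl i₀)]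
  have hZe : Z v₀ = Sum.elim v₀ (0 : Fin d₂ → ℂ) := by
    funext i
    cases i with
    | inl i => rw [hZp]; simp
    | inr j => rw [hu0 j]; rfl
  have hfin : Aᴴ *ᵥ Sum.elim v₀ (0 : Fin d₂ → ℂ) = lam • Sum.elim v₀ (0 : Fin d₂ → ℂ) := by
    conv_lhs => rw [← hZe]
    rw [hAZ, hv₀eig]
    funext i
    cases i <;> simp
  have hne2 : Sum.elim v₀ (0 : Fin d₂ → ℂ) ≠ 0 := by
    intro h
    exact hi₀ (by simpa using congrFun h (Sum.inl i₀))
  have hlamspec : lam ∈ spectrum ℂ Aᴴ := (mem_spectrum_iff_eig _ _).mpr ⟨_, hne2, hfin⟩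
  have hμspec : μ ∈ spectrum ℂ A := by
    have h := conj_mem_spectrum hlamspec
    rw [Matrix.conjTranspose_conjTranspose] at h
    simpa [hlam] using h
  have := hHurwitz μ hμspec
  linarith
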